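/- Let T ∈ (0, ∞], E₀ ≥ 0, and let I : [0, T) → ℝ be twice differentiable with I(t) > 0 for all t ∈ [0, T), I'(0) > 0, (I'(0))² > 8·E₀·I(0), and I(t)·I''(t) - (5/4)·(I'(t))² ≥ -6·E₀·I(t) for all t ∈ [0, T). Then T ≤ 4·I(0)/√((I'(0))² - 8·E₀·I(0)). (This is the quantitative concavity-type blow-up argument used in the positive-energy case of the blow-up theorem for the Klein–Gordon–Boussinesq system.) -/

import Mathlib

open scoped ENNReal

open Set

lemma blowup_aux (b : ℝ) (hb : 0 ≤ b) (E₀ : ℝ) (hE₀ : 0 ≤ E₀) (I I' I'' : ℝ → ℝ)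
    (hder1 : ∀ t ∈ Icc 0 b, HasDerivWithinAt I (I' t) (Icc 0 b) t)
    (hder2 : ∀ t ∈ Icc 0 b, HasDerivWithinAt I' (I'' t) (Icc 0 b) t)
    (hpos : ∀ t ∈ Icc 0 b, 0 < I t)
    (h0 : 0 < I' 0)
    (hgap : (I' 0) ^ 2 > 8 * E₀ * I 0)
    (hineq : ∀ t ∈ Icc 0 b, I t * I'' t - (5 / 4) * (I' t) ^ 2 ≥ -6 * E₀ * I t) :
    b < 4 * I 0 / Real.sqrt ((I' 0) ^ 2 - 8 * E₀ * I 0) := by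
  have h0b : (0:ℝ) ∈ Icc 0 b := ⟨le_refl 0, hb⟩
  have hI0 : 0 < I 0 := hpos 0 h0b
  -- rpow derivative helper
  have hrp : ∀ (p : ℝ), ∀ t ∈ Icc 0 b,
      HasDerivWithinAt (fun s => I s ^ p) (p * I t ^ (p-1) * I' t) (Icc 0 b) t := by
    intro p t ht
    exact (Real.hasDerivAt_rpow_const (Or.inl (hpos t ht).ne')).comp_hasDerivWithinAt t (hder1 t ht)
  set F : ℝ → ℝ := fun t => I' t * I t ^ (-(5/4) : ℝ) with hF
  set W : ℝ → ℝ := fun t => (I' t)^2 * I t ^ (-(5/2):ℝ) - 8*E₀* I t ^ (-(3/2):ℝ) with hW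
  set W' : ℝ → ℝ := fun t =>
    I' t * I t ^ (-(7/2):ℝ) * (2*(I t * I'' t) - (5/2)*(I' t)^2 + 12*E₀*I t) with hW'
  -- derivative of W
  have hWd : ∀ t ∈ Icc 0 b, HasDerivWithinAt W (W' t) (Icc 0 b) t := by
    intro t ht
    have hne := (hpos t ht).ne'
    have h1 : HasDerivWithinAt W
        ((2 * I' t ^ 1 * I'' t) * I t ^ (-(5/2):ℝ)
          + (I' t)^2 * (-(5/2) * I t ^ (-(5/2)-1:ℝ) * I' t)
          - 8*E₀ * (-(3/2) * I t ^ (-(3/2)-1:ℝ) * I' t)) (Icc 0 b) t :=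
      (((hder2 t ht).pow 2).mul (hrp _ t ht)).sub ((hrp _ t ht).const_mul (8*E₀))
    convert h1 using 1
    have e1 : (-(5/2)-1 : ℝ) = -(7/2) := by norm_num
    have e2 : (-(3/2)-1 : ℝ) = -(5/2) := by norm_num
    have e3 : I t ^ (-(5/2):ℝ) = I t ^ (-(7/2):ℝ) * I t := by
      rw [← Real.rpow_add_one hne]; norm_num
    rw [e1, e2, e3]; ring
  have hWd' : 0 ∈ Icc 0 b → True := fun _ => trivial
  -- W' nonneg when I' nonneg
  have hW'nn : ∀ t ∈ Icc 0 b, 0 ≤ I' t → 0 ≤ W' t := by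
    intro t ht hI'
    have hb1 : 0 ≤ 2*(I t * I'' t) - (5/2)*(I' t)^2 + 12*E₀*I t := by
      have := hineq t ht; nlinarith
    have : (0:ℝ) < I t ^ (-(7/2):ℝ) := Real.rpow_pos_of_pos (hpos t ht) _
    positivity
  -- continuity
  have hIc : ContinuousOn I (Icc 0 b) := fun t ht => (hder1 t ht).continuousWithinAt
  have hI'c : ContinuousOn I' (Icc 0 b) := fun t ht => (hder2 t ht).continuousWithinAt
  have hFc : ContinuousOn F (Icc 0 b) := by
    apply hI'c.mul
    exact (hIc.rpow_const (fun t ht => Or.inl (hpos t ht).ne'))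
  have hWc : ContinuousOn W (Icc 0 b) := fun t ht => (hWd t ht).continuousWithinAt
  -- c
  set c : ℝ := Real.sqrt (W 0) with hc
  have hW0 : W 0 = I 0 ^ (-(5/2):ℝ) * ((I' 0)^2 - 8*E₀*I 0) := by
    have e3 : I 0 ^ (-(3/2):ℝ) = I 0 ^ (-(5/2):ℝ) * I 0 := by
      rw [← Real.rpow_add_one hI0.ne']; norm_num
    rw [hW]; simp only; rw [e3]; ring
  have hW0pos : 0 < W 0 := by
    rw [hW0]
    exact mul_pos (Real.rpow_pos_of_pos hI0 _) (by linarith)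
  have hcpos : 0 < c := Real.sqrt_pos.mpr hW0pos
  have hFsq : ∀ t ∈ Icc 0 b, (F t)^2 = W t + 8*E₀* I t ^ (-(3/2):ℝ) := by
    intro t ht
    have e : (I t ^ (-(5/4):ℝ))^2 = I t ^ (-(5/2):ℝ) := by
      rw [← Real.rpow_natCast (I t ^ (-(5/4):ℝ)) 2, ← Real.rpow_mul (hpos t ht).le]
      norm_num
    rw [hF, hW]; simp only; rw [mul_pow, e]; ring
  have hF0 : c ≤ F 0 := by
    have h1 : c ≤ |F 0| := by
      rw [← Real.sqrt_sq_eq_abs]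
      apply Real.sqrt_le_sqrt
      rw [hFsq 0 h0b]
      have : (0:ℝ) ≤ 8*E₀*I 0 ^ (-(3/2):ℝ) := by positivity
      linarith
    have hF0pos : 0 < F 0 := mul_pos h0 (Real.rpow_pos_of_pos hI0 _)
    rwa [abs_of_pos hF0pos] at h1
  -- Stage 1 : c/2 < F on Icc
  have stage1 : ∀ t ∈ Icc 0 b, c/2 < F t := by
    by_contra hcon
    push_neg at hcon
    set Z : Set ℝ := Icc 0 b ∩ F ⁻¹' (Iic (c/2)) with hZ
    have hZne : Z.Nonempty := by
      obtain ⟨t, ht, ht2⟩ := hcon; exact ⟨t, ht, ht2⟩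
    have hZcl : IsClosed Z := hFc.preimage_isClosed_of_isClosed isClosed_Icc isClosed_Iic
    have hZbdd : BddBelow Z := ⟨0, fun t ht => ht.1.1⟩
    set t₀ : ℝ := sInf Z with ht₀
    have ht₀Z : t₀ ∈ Z := hZcl.csInf_mem hZne hZbdd
    have ht₀I : t₀ ∈ Icc 0 b := ht₀Z.1
    have ht₀F : F t₀ ≤ c/2 := ht₀Z.2
    have hbefore : ∀ s, 0 ≤ s → s < t₀ → c/2 < F s := by
      intro s hs hst
      by_contra hle
      push_neg at hle
      have : s ∈ Z := ⟨⟨hs, le_trans hst.le ht₀I.2⟩, hle⟩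
      exact absurd (csInf_le hZbdd this) (not_le.mpr hst)
    have ht₀pos : 0 < t₀ := by
      rcases lt_or_eq_of_le ht₀I.1 with h | h
      · exact h
      · exfalso; rw [← h] at ht₀F; linarith
    -- W monotone on Icc 0 t₀
    have hsub : Icc 0 t₀ ⊆ Icc 0 b := Icc_subset_Icc le_rfl ht₀I.2
    have hWmono : MonotoneOn W (Icc 0 t₀) := by
      apply monotoneOn_of_hasDerivWithinAt_nonneg (convex_Icc 0 t₀) (hWc.mono hsub)
          (f' := W')
      · intro x hx
        rw [interior_Icc] at hx ⊢
        exact ((hWd x (hsub ⟨hx.1.le, hx.2.le⟩)).mono (Ioo_subset_Icc_self.trans hsub))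
      · intro x hx
        rw [interior_Icc] at hx
        have hxI : x ∈ Icc 0 b := hsub ⟨hx.1.le, hx.2.le⟩
        apply hW'nn x hxI
        have := hbefore x hx.1.le hx.2
        have hF' : 0 < F x := lt_trans (half_pos hcpos) this
        by_contra hneg
        push_neg at hneg
        have : F x ≤ 0 := mul_nonpos_of_nonpos_of_nonneg hneg.le
          (Real.rpow_pos_of_pos (hpos x hxI) _).le
        linarith
    have hWt₀ : W 0 ≤ W t₀ := hWmono ⟨le_rfl, ht₀pos.le⟩ ⟨ht₀pos.le, le_rfl⟩ ht₀pos.le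
    have habs : c ≤ |F t₀| := by
      rw [← Real.sqrt_sq_eq_abs]
      apply Real.sqrt_le_sqrt
      rw [hFsq t₀ ht₀I]
      have h8 : (0:ℝ) ≤ 8*E₀*I t₀ ^ (-(3/2):ℝ) :=
        mul_nonneg (by positivity) (Real.rpow_pos_of_pos (hpos t₀ ht₀I) _).le
      exact hWt₀.trans (le_add_of_nonneg_right h8)
    -- F t₀ ≤ c/2 < c so F t₀ ≤ -c < 0 hence I' t₀ < 0
    have hFneg : F t₀ < 0 := by
      rcases abs_cases (F t₀) with ⟨h1, _⟩ | ⟨h1, h2⟩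
      · linarith [habs, h1]
      · linarith
    have hI't₀ : I' t₀ < 0 := by
      have hp := Real.rpow_pos_of_pos (hpos t₀ ht₀I) (-(5/4):ℝ)
      by_contra hge
      push_neg at hge
      have : 0 ≤ F t₀ := mul_nonneg hge hp.le
      linarith
    -- IVT: I' vanishes at some s ∈ Icc 0 t₀
    have hiv : (0:ℝ) ∈ I' '' Icc 0 t₀ := by
      apply intermediate_value_Icc' ht₀pos.le (hI'c.mono hsub)
      exact ⟨hI't₀.le, h0.le⟩
    obtain ⟨s, hsI, hs0⟩ := hiv
    have hsZ : s ∈ Z := by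
      refine ⟨⟨hsI.1, le_trans hsI.2 ht₀I.2⟩, ?_⟩
      simp only [mem_preimage, mem_Iic, hF]
      rw [hs0, zero_mul]; linarith
    have hts : t₀ ≤ s := csInf_le hZbdd hsZ
    have hst₀ : s < t₀ := by
      rcases lt_or_eq_of_le hsI.2 with h | h
      · exact h
      · exfalso; rw [h] at hs0; rw [hs0] at hI't₀; exact lt_irrefl 0 hI't₀
    exact absurd hts (not_le.mpr hst₀)
  -- Stage 2 : c ≤ F on Icc
  have hI'pos : ∀ t ∈ Icc 0 b, 0 < I' t := by
    intro t ht
    have h1 : c/2 < I' t * I t ^ (-(5/4):ℝ) := stage1 t ht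
    have hp := Real.rpow_pos_of_pos (hpos t ht) (-(5/4):ℝ)
    nlinarith
  have hWmono : MonotoneOn W (Icc 0 b) := by
    apply monotoneOn_of_hasDerivWithinAt_nonneg (convex_Icc 0 b) hWc (f' := W')
    · intro x hx
      rw [interior_Icc] at hx ⊢
      exact (hWd x ⟨hx.1.le, hx.2.le⟩).mono Ioo_subset_Icc_self
    · intro x hx
      rw [interior_Icc] at hx
      exact hW'nn x ⟨hx.1.le, hx.2.le⟩ (hI'pos x ⟨hx.1.le, hx.2.le⟩).le
  have stage2 : ∀ t ∈ Icc 0 b, c ≤ F t := by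
    intro t ht
    have h1 : c ≤ |F t| := by
      rw [← Real.sqrt_sq_eq_abs]
      apply Real.sqrt_le_sqrt
      rw [hFsq t ht]
      have h2 : W 0 ≤ W t := hWmono h0b ht ht.1
      have h8 : (0:ℝ) ≤ 8*E₀*I t ^ (-(3/2):ℝ) :=
        mul_nonneg (by positivity) (Real.rpow_pos_of_pos (hpos t ht) _).le
      exact h2.trans (le_add_of_nonneg_right h8)
    have : 0 < F t := mul_pos (hI'pos t ht) (Real.rpow_pos_of_pos (hpos t ht) _)
    rwa [abs_of_pos this] at h1
  -- Stage 3 : K decreases at rate c/4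
  set g : ℝ → ℝ := fun t => I t ^ (-(1/4):ℝ) + (c/4) * t with hg
  have hgd : ∀ t ∈ Icc 0 b, HasDerivWithinAt g (-(1/4) * I t ^ (-(5/4):ℝ) * I' t + c/4) (Icc 0 b) t := by
    intro t ht
    have h1 := (hrp (-(1/4)) t ht).add ((hasDerivWithinAt_id t _).const_mul (c/4))
    have e : (-(1/4)-1 : ℝ) = -(5/4) := by norm_num
    rw [e] at h1
    have h2 : HasDerivWithinAt g (-(1/4) * I t ^ (-(5/4):ℝ) * I' t + c/4 * 1) (Icc 0 b) t := h1
    convert h2 using 1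
    ring
  have hganti : AntitoneOn g (Icc 0 b) := by
    apply antitoneOn_of_hasDerivWithinAt_nonpos (convex_Icc 0 b)
        (f' := fun t => -(1/4) * I t ^ (-(5/4):ℝ) * I' t + c/4)
    · apply ContinuousOn.add
      · exact hIc.rpow_const (fun t ht => Or.inl (hpos t ht).ne')
      · exact (continuousOn_id.const_smul (c/4))
    · intro x hx
      rw [interior_Icc] at hx ⊢
      exact (hgd x ⟨hx.1.le, hx.2.le⟩).mono Ioo_subset_Icc_self
    · intro x hx
      rw [interior_Icc] at hx
      have hxI : x ∈ Icc 0 b := ⟨hx.1.le, hx.2.le⟩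
      have := stage2 x hxI
      have hFx : -(1/4) * I x ^ (-(5/4):ℝ) * I' x = -(F x)/4 := by rw [hF]; simp only; ring
      rw [hFx]
      linarith
  have hgb : g b ≤ g 0 := hganti h0b ⟨hb, le_rfl⟩ hb
  have hKb : 0 < I b ^ (-(1/4):ℝ) := Real.rpow_pos_of_pos (hpos b ⟨hb, le_rfl⟩) _
  have hfinal : (c/4) * b < I 0 ^ (-(1/4):ℝ) := by
    rw [hg] at hgb; simp only at hgb
    linarith
  -- identify the constant
  have hc54 : c = I 0 ^ (-(5/4):ℝ) * Real.sqrt ((I' 0)^2 - 8*E₀*I 0) := by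
    rw [hc, hW0, Real.sqrt_mul (Real.rpow_pos_of_pos hI0 _).le]
    congr 1
    have e : I 0 ^ (-(5/2):ℝ) = (I 0 ^ (-(5/4):ℝ))^2 := by
      rw [← Real.rpow_natCast (I 0 ^ (-(5/4):ℝ)) 2, ← Real.rpow_mul hI0.le]
      norm_num
    rw [e, Real.sqrt_sq (Real.rpow_pos_of_pos hI0 _).le]
  have e14 : I 0 ^ (-(1/4):ℝ) = I 0 ^ (-(5/4):ℝ) * I 0 := by
    rw [← Real.rpow_add_one hI0.ne']; norm_num
  have hsg : 0 < Real.sqrt ((I' 0)^2 - 8*E₀*I 0) := Real.sqrt_pos.mpr (by linarith)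
  have h54 : 0 < I 0 ^ (-(5/4):ℝ) := Real.rpow_pos_of_pos hI0 _
  rw [hc54, e14] at hfinal
  rw [lt_div_iff₀ hsg]
  nlinarith [hfinal, h54, hsg, mul_pos h54 hsg]


/-- Quantitative concavity-type blow-up argument (positive-energy case):
a twice differentiable, strictly positive `I` on `[0, T)` with `I'(0) > 0`,
`(I'(0))² > 8·E₀·I(0)` and `I·I'' - (5/4)(I')² ≥ -6·E₀·I` forces
`T ≤ 4·I(0)/√((I'(0))² - 8·E₀·I(0))`. -/
theorem stmt_2 (T : ℝ≥0∞) (hT : 0 < T) (E₀ : ℝ) (hE₀ : 0 ≤ E₀)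
    (I I' I'' : ℝ → ℝ)
    (S : Set ℝ) (hS : S = {t : ℝ | 0 ≤ t ∧ ENNReal.ofReal t < T})
    (hder1 : ∀ t ∈ S, HasDerivWithinAt I (I' t) S t)
    (hder2 : ∀ t ∈ S, HasDerivWithinAt I' (I'' t) S t)
    (hpos : ∀ t ∈ S, 0 < I t)
    (h0 : 0 < I' 0)
    (hgap : (I' 0) ^ 2 > 8 * E₀ * I 0)
    (hineq : ∀ t ∈ S, I t * I'' t - (5 / 4) * (I' t) ^ 2 ≥ -6 * E₀ * I t) :
    T ≤ ENNReal.ofReal (4 * I 0 / Real.sqrt ((I' 0) ^ 2 - 8 * E₀ * I 0)) := by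
  set B : ℝ := 4 * I 0 / Real.sqrt ((I' 0) ^ 2 - 8 * E₀ * I 0) with hB
  have h0S : (0:ℝ) ∈ S := by rw [hS]; exact ⟨le_rfl, by simpa using hT⟩
  -- every point of S is < B
  have key : ∀ b ∈ S, b < B := by
    intro b hb
    have hb0 : 0 ≤ b := by rw [hS] at hb; exact hb.1
    have hsub : Icc 0 b ⊆ S := by
      intro t ht
      rw [hS] at hb ⊢
      exact ⟨ht.1, lt_of_le_of_lt (ENNReal.ofReal_le_ofReal ht.2) hb.2⟩
    exact blowup_aux b hb0 E₀ hE₀ I I' I''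
      (fun t ht => (hder1 t (hsub ht)).mono hsub)
      (fun t ht => (hder2 t (hsub ht)).mono hsub)
      (fun t ht => hpos t (hsub ht)) h0 hgap
      (fun t ht => hineq t (hsub ht))
  by_contra hcon
  push_neg at hcon
  obtain ⟨x, hx1, hx2⟩ := exists_between hcon
  have hxne : x ≠ ⊤ := by
    intro h; rw [h] at hx2; exact (not_top_lt hx2)
  have hBpos : 0 ≤ B := by
    have := hpos 0 h0S
    rw [hB]
    positivity
  have hxS : x.toReal ∈ S := by
    rw [hS]
    exact ⟨ENNReal.toReal_nonneg, by rwa [ENNReal.ofReal_toReal hxne]⟩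
  have hxB : B < x.toReal := by
    rwa [ENNReal.ofReal_lt_iff_lt_toReal hBpos hxne] at hx1
  exact absurd (key _ hxS) (not_lt.mpr hxB.le)
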